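/- The leading 2×2 principal minor of the 4×4 matrix ρH_II above equals r̄₁ r̄₂ f' ( f' − f''(R₁²/r̄₁ + R₂²/r̄₂) ), and the 3×3 leading principal minor equals (ρ²f'/T) times the 2×2 minor. -/
import Mathlib


open Matrix

theorem stmt_9 (rb1 rb2 ρ T cv R1 R2 f' f'' : ℝ)
    (h1 : rb1 ≠ 0) (h2 : rb2 ≠ 0) (h3 : ρ ≠ 0) (h4 : T ≠ 0) (h5 : cv ≠ 0)
    (η : ℝ) (hη : η = f' - cv * f'')
    (M : Matrix (Fin 4) (Fin 4) ℝ)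
    (hM : M = !![f' * rb1 - f'' * R1 ^ 2, -(R1 * R2 * f''), 0, (ρ * cv / T) * R1 * f'';
        -(R1 * R2 * f''), f' * rb2 - f'' * R2 ^ 2, 0, (ρ * cv / T) * R2 * f'';
        0, 0, ρ ^ 2 * f' / T, 0;
        (ρ * cv / T) * R1 * f'', (ρ * cv / T) * R2 * f'', 0,
          (ρ ^ 2 * cv / T ^ 2) * η]) :
    (M.submatrix (Fin.castLE (by norm_num : (2:ℕ) ≤ 4))
        (Fin.castLE (by norm_num : (2:ℕ) ≤ 4))).det
      = rb1 * rb2 * f' * (f' - f'' * (R1 ^ 2 / rb1 + R2 ^ 2 / rb2)) ∧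
    (M.submatrix (Fin.castLE (by norm_num : (3:ℕ) ≤ 4))
        (Fin.castLE (by norm_num : (3:ℕ) ≤ 4))).det
      = (ρ ^ 2 * f' / T) *
          (rb1 * rb2 * f' * (f' - f'' * (R1 ^ 2 / rb1 + R2 ^ 2 / rb2))) := by
  subst hM
  constructor <;>
  · simp [Matrix.det_fin_two, Matrix.det_fin_three, Matrix.submatrix,
      Fin.castLE, Matrix.of_apply, Fin.isValue]
    field_simp
    ring
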